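/- Correctness of the CL-Ring scheme: Let n be a positive natural number, s : Fin n, and let κ, x_s : ZMod q, scalars r, h : Fin n → ZMod q, and elements Q : Fin n → G₁, Pk : Fin n → G₁, U : G₁ with P₀ = κ•P, Pk s = x_s•P (the signer's public key) and D_s = κ•(Q s) (the signer's partial private key). Define y : Fin n → G₂ by y i = e((r i)•P, P) for i ≠ s and y s = e((r s)•P, P) · e(-P₀, ∑_{i ≠ s} (h i)•(Q i)) · e(-U, ∑_{i ≠ s} (h i)•(Pk i)), and set V = (∑ i, r i)•P + (h s)•(D_s + x_s•U). Then the verification equation holds: e(V, P) = (∏ i, y i) · e(∑ i, (h i)•(Q i), P₀) · e(∑ i, (h i)•(Pk i), U). -/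

import Mathlib

theorem clring_correctness
    {q : ℕ} [Fact (Nat.Prime q)]
    {G₁ : Type*} [AddCommGroup G₁] [Module (ZMod q) G₁]
    {G₂ : Type*} [CommGroup G₂]
    (P : G₁) (e : G₁ → G₁ → G₂)
    (e_add_left : ∀ x y z : G₁, e (x + y) z = e x z * e y z)
    (e_add_right : ∀ x y z : G₁, e x (y + z) = e x y * e x z)
    (e_smul : ∀ (a : ZMod q) (x y : G₁), e (a • x) y = e x (a • y))
    (e_symm : ∀ x y : G₁, e x y = e y x)
    (n : ℕ) (hn : 0 < n) (s : Fin n)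
    (κ x_s : ZMod q) (r h : Fin n → ZMod q)
    (Q Pk : Fin n → G₁) (U P₀ D_s : G₁)
    (hP₀ : P₀ = κ • P) (hPk : Pk s = x_s • P) (hDs : D_s = κ • Q s)
    (y : Fin n → G₂)
    (hy : ∀ i, i ≠ s → y i = e (r i • P) P)
    (hys : y s = e (r s • P) P
        * e (-P₀) (∑ i ∈ Finset.univ.erase s, h i • Q i)
        * e (-U) (∑ i ∈ Finset.univ.erase s, h i • Pk i))
    (V : G₁) (hV : V = (∑ i, r i) • P + h s • (D_s + x_s • U)) :
    e V P = (∏ i, y i) * e (∑ i, h i • Q i) P₀ * e (∑ i, h i • Pk i) U := by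
  have e_zero_left : ∀ z, e 0 z = 1 := by
    intro z
    have := e_add_left 0 0 z
    simp at this
    exact this
  have e_neg_left : ∀ x z, e (-x) z = (e x z)⁻¹ := by
    intro x z
    have := e_add_left x (-x) z
    simp [e_zero_left] at this
    exact eq_inv_of_mul_eq_one_right this.symm
  have e_sum_left : ∀ (t : Finset (Fin n)) (f : Fin n → G₁) (z : G₁),
      e (∑ i ∈ t, f i) z = ∏ i ∈ t, e (f i) z := by
    intro t f z
    induction t using Finset.induction with
    | empty => simp [e_zero_left]
    | insert _ _ hx ih => simp [Finset.sum_insert hx, Finset.prod_insert hx, e_add_left, ih]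
  have smul_sum_eq : ∀ (f : Fin n → ZMod q),
      (∑ i, f i • P) = (∑ i, f i) • P := by
    intro f; rw [Finset.sum_smul]
  -- rewrite product of y
  have hprod : (∏ i, y i) = (∏ i ∈ Finset.univ.erase s, e (r i • P) P) * y s := by
    rw [← Finset.prod_erase_mul _ _ (Finset.mem_univ s)]
    congr 1
    exact Finset.prod_congr rfl fun i hi => hy i (Finset.ne_of_mem_erase hi)
  have hsplitQ : (∑ i, h i • Q i) = (∑ i ∈ Finset.univ.erase s, h i • Q i) + h s • Q s := by
    rw [← Finset.sum_erase_add _ _ (Finset.mem_univ s)]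
  have hsplitPk : (∑ i, h i • Pk i) = (∑ i ∈ Finset.univ.erase s, h i • Pk i) + h s • Pk s := by
    rw [← Finset.sum_erase_add _ _ (Finset.mem_univ s)]
  have hrsum : e ((∑ i, r i) • P) P = ∏ i, e (r i • P) P := by
    rw [← smul_sum_eq, e_sum_left]
  have hrprod : (∏ i, e (r i • P) P)
      = (∏ i ∈ Finset.univ.erase s, e (r i • P) P) * e (r s • P) P := by
    rw [← Finset.prod_erase_mul _ _ (Finset.mem_univ s)]
  rw [hV, hprod, hys, hsplitQ, hsplitPk, e_add_left, hrsum, hrprod,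
    e_add_left (∑ i ∈ Finset.univ.erase s, h i • Q i),
    e_add_left (∑ i ∈ Finset.univ.erase s, h i • Pk i)]
  have c1 : e (∑ i ∈ Finset.univ.erase s, h i • Q i) P₀
      = (e (-P₀) (∑ i ∈ Finset.univ.erase s, h i • Q i))⁻¹ := by
    rw [e_neg_left, inv_inv, e_symm]
  have c2 : e (∑ i ∈ Finset.univ.erase s, h i • Pk i) U
      = (e (-U) (∑ i ∈ Finset.univ.erase s, h i • Pk i))⁻¹ := by
    rw [e_neg_left, inv_inv, e_symm]
  rw [c1, c2]
  have key : e (h s • (D_s + x_s • U)) P = e (h s • Q s) P₀ * e (h s • Pk s) U := by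
    rw [hP₀, hPk, hDs, smul_add, e_add_left]
    congr 1
    · rw [smul_comm, e_smul]
    · calc e (h s • x_s • U) P = e (x_s • h s • U) P := by rw [smul_comm]
        _ = e (h s • U) (x_s • P) := e_smul ..
        _ = e (x_s • P) (h s • U) := e_symm ..
        _ = e (h s • x_s • P) U := (e_smul (h s) (x_s • P) U).symm
  rw [key]
  generalize e (-P₀) (∑ i ∈ Finset.univ.erase s, h i • Q i) = A
  generalize e (-U) (∑ i ∈ Finset.univ.erase s, h i • Pk i) = B
  rw [← Additive.ofMul.apply_eq_iff_eq]
  simp only [ofMul_mul, ofMul_inv]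
  abel
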